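/- Let m ∈ ℕ, m ≥ 2, let 1 ≤ p < q ≤ ∞ and put α = 1/p − 1/q (with the convention 1/∞ = 0). For each i ∈ {1, …, m} let X_i, Y_i be Banach spaces and T_i a bounded linear operator from X_i to Y_i. Suppose that for every i, s ∈ {1, …, m} one has e_s(T_i) ≤ (m/s)^α. Let T : ℓ_p^m({X_i}) → ℓ_q^m({Y_i}) be the diagonal operator T(x₁, …, x_m) = (T₁(x₁), …, T_m(x_m)). Then e_{5m}(T) ≤ 3^{1/q}. -/

import Mathlib

open Metric Set
open scoped ENNReal

/-- The `n`-th (dyadic) entropy number of a bounded linear operator `T : X → Y`: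
the infimum of all `ε > 0` such that the image of the closed unit ball of `X`
can be covered by `2 ^ (n - 1)` closed balls of radius `ε` in `Y`. -/
noncomputable def entropyNum {X Y : Type*} [NormedAddCommGroup X] [NormedSpace ℝ X]
    [NormedAddCommGroup Y] [NormedSpace ℝ Y] (n : ℕ) (T : X →L[ℝ] Y) : ℝ :=
  sInf {ε : ℝ | 0 < ε ∧ ∃ S : Finset Y, S.card ≤ 2 ^ (n - 1) ∧
    T '' closedBall 0 1 ⊆ ⋃ y ∈ S, closedBall y ε}

/-- The `n`-th (dyadic) inner entropy number of a bounded linear operator `T : X → Y`: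
the supremum of all `ε > 0` such that there are `2 ^ (n - 1) + 1` points in the closed
unit ball of `X` whose images under `T` are pairwise at distance at least `2 * ε`. -/
noncomputable def innerEntropyNum {X Y : Type*} [NormedAddCommGroup X] [NormedSpace ℝ X]
    [NormedAddCommGroup Y] [NormedSpace ℝ Y] (n : ℕ) (T : X →L[ℝ] Y) : ℝ :=
  sSup {ε : ℝ | 0 < ε ∧ ∃ x : Fin (2 ^ (n - 1) + 1) → X, (∀ i, ‖x i‖ ≤ 1) ∧
    ∀ i j, i ≠ j → 2 * ε ≤ ‖T (x i) - T (x j)‖}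

private lemma geom_half_Icc (m : ℕ) :
    ∑ s ∈ Finset.Icc 1 m, ((1:ℝ)/2)^s ≤ 1 - ((1:ℝ)/2)^m := by
  induction m with
  | zero => simp
  | succ n ih =>
    rw [Finset.sum_Icc_succ_top (by omega : 1 ≤ n+1)]
    have hps : ((1:ℝ)/2)^(n+1) = ((1:ℝ)/2)^n * (1/2) := pow_succ _ _
    linarith

private lemma geom_half_Icc_le_one (m : ℕ) : ∑ s ∈ Finset.Icc 1 m, ((1:ℝ)/2)^s ≤ 1 := by
  have h := geom_half_Icc m
  have h2 : (0:ℝ) ≤ ((1:ℝ)/2)^m := by positivity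
  linarith

/-- Lemma 2.3: if `e_s(Tᵢ) ≤ (m/s)^α` for all `i, s ∈ {1,…,m}` (`α = 1/p - 1/q`), then the
diagonal operator `T : ℓ_p^m({Xᵢ}) → ℓ_q^m({Yᵢ})` satisfies `e_{5m}(T) ≤ 3^(1/q)`. -/
theorem entropy_diagonal_5m (m : ℕ) (hm : 2 ≤ m)
    (p q : ℝ≥0∞) [Fact (1 ≤ p)] [Fact (1 ≤ q)] (hpq : p < q)
    (X Y : Fin m → Type*)
    [∀ i, NormedAddCommGroup (X i)] [∀ i, NormedSpace ℝ (X i)]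
    [∀ i, NormedAddCommGroup (Y i)] [∀ i, NormedSpace ℝ (Y i)]
    (Ti : ∀ i, X i →L[ℝ] Y i)
    (hTi : ∀ (i : Fin m) (s : ℕ), 1 ≤ s → s ≤ m →
      entropyNum s (Ti i) ≤ ((m : ℝ) / s) ^ (1 / p.toReal - 1 / q.toReal))
    (T : PiLp p X →L[ℝ] PiLp q Y) (hT : ∀ x i, T x i = Ti i (x i)) :
    entropyNum (5 * m) T ≤ (3 : ℝ) ^ (1 / q.toReal) := by
  classical
  have hm0 : 0 < m := by omega
  have hmR : (0:ℝ) < m := by exact_mod_cast hm0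
  have hp_top : p ≠ ∞ := (lt_of_lt_of_le hpq le_top).ne
  have hp1 : 1 ≤ p.toReal := by
    have := ENNReal.toReal_mono hp_top (Fact.out : 1 ≤ p)
    simpa using this
  have hp0 : 0 < p.toReal := lt_of_lt_of_le one_pos hp1
  have hp0' : p.toReal ≠ 0 := ne_of_gt hp0
  have hq0 : 0 ≤ q.toReal := ENNReal.toReal_nonneg
  have hinvq0 : 0 ≤ 1 / q.toReal := by positivity
  have hqple : 1 / q.toReal ≤ 1 / p.toReal := by
    rcases eq_or_ne q ⊤ with hq | hq
    · rw [hq, ENNReal.toReal_top, div_zero]; positivity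
    · have hpq' : p.toReal < q.toReal := (ENNReal.toReal_lt_toReal hp_top hq).mpr hpq
      exact one_div_le_one_div_of_le hp0 hpq'.le
  have hα0 : 0 ≤ 1 / p.toReal - 1 / q.toReal := by linarith
  -- reduce to: every ε > 3^(1/q') belongs to the defining set
  rw [entropyNum]
  apply le_of_forall_gt_imp_ge_of_dense
  intro ε hε
  have h30 : (0:ℝ) < (3:ℝ) ^ (1 / q.toReal) := Real.rpow_pos_of_pos (by norm_num) _
  have hε0 : 0 < ε := lt_trans h30 hε
  have h2q0 : (0:ℝ) < (2:ℝ) ^ (1 / q.toReal) := Real.rpow_pos_of_pos two_pos _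
  have h2q : (2:ℝ) ^ (1 / q.toReal) < ε :=
    lt_of_le_of_lt (Real.rpow_le_rpow (by norm_num) (by norm_num) hinvq0) hε
  set δ : ℝ := ε / (2:ℝ) ^ (1 / q.toReal) - 1 with hδdef
  have hδ0 : 0 < δ := by
    rw [hδdef, sub_pos]
    exact (one_lt_div h2q0).mpr h2q
  have hεδ : (1 + δ) * (2:ℝ) ^ (1 / q.toReal) = ε := by
    rw [hδdef]
    field_simp
    ring
  -- extract coverings for each (i, s)
  have key : ∀ (i : Fin m) (s : ℕ), ∃ r : ℝ, ∃ Sc : Finset (Y i),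
      1 ≤ s → s ≤ m →
      (0 < r ∧ r ≤ ((m:ℝ)/s) ^ (1 / p.toReal - 1 / q.toReal) + δ ∧ Sc.card ≤ 2 ^ (s-1) ∧
        (Ti i) '' closedBall 0 1 ⊆ ⋃ y ∈ Sc, closedBall y r) := by
    intro i s
    by_cases hs : 1 ≤ s ∧ s ≤ m
    · obtain ⟨hs1, hsm⟩ := hs
      have hle := hTi i s hs1 hsm
      rw [entropyNum] at hle
      have hne : ({ε' : ℝ | 0 < ε' ∧ ∃ S : Finset (Y i), S.card ≤ 2 ^ (s - 1) ∧
          (Ti i) '' closedBall 0 1 ⊆ ⋃ y ∈ S, closedBall y ε'}).Nonempty := by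
        refine ⟨‖Ti i‖ + 1, by positivity, {0}, by simpa using Nat.one_le_two_pow, ?_⟩
        rintro z ⟨x, hx, rfl⟩
        rw [mem_closedBall_zero_iff] at hx
        apply Set.mem_biUnion (Finset.mem_singleton_self 0)
        rw [mem_closedBall_zero_iff]
        calc ‖(Ti i) x‖ ≤ ‖Ti i‖ * ‖x‖ := (Ti i).le_opNorm x
          _ ≤ ‖Ti i‖ * 1 := by
              apply mul_le_mul_of_nonneg_left hx (norm_nonneg _)
          _ ≤ ‖Ti i‖ + 1 := by linarith [norm_nonneg (Ti i)]
      have hlt : sInf {ε' : ℝ | 0 < ε' ∧ ∃ S : Finset (Y i), S.card ≤ 2 ^ (s - 1) ∧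
          (Ti i) '' closedBall 0 1 ⊆ ⋃ y ∈ S, closedBall y ε'}
          < ((m:ℝ)/s) ^ (1 / p.toReal - 1 / q.toReal) + δ :=
        lt_of_le_of_lt hle (lt_add_of_pos_right _ hδ0)
      obtain ⟨r, hrmem, hrlt⟩ := exists_lt_of_csInf_lt hne hlt
      exact ⟨r, hrmem.2.choose, fun _ _ =>
        ⟨hrmem.1, hrlt.le, hrmem.2.choose_spec.1, hrmem.2.choose_spec.2⟩⟩
    · exact ⟨1, ∅, fun h1 h2 => absurd ⟨h1, h2⟩ hs⟩
  choose r Sc hkey using key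
  -- the index set and center sets
  set c : (Fin m → ℕ) → Fin m → ℝ := fun k i => ((k i : ℝ)/m) ^ (1 / p.toReal) with hc
  set K : Finset (Fin m → ℕ) :=
    (Fintype.piFinset fun _ => Finset.Icc 1 m).filter (fun k => ∑ i, k i ≤ 2*m) with hK
  set C : (Fin m → ℕ) → Finset (PiLp q Y) := fun k =>
    (Fintype.piFinset fun i => Sc i (k i)).image
      (fun y => (WithLp.equiv q (∀ i, Y i)).symm (fun i => (c k i) • y i)) with hCdef
  set Stot : Finset (PiLp q Y) := K.biUnion C with hStot
  -- cardinality bound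
  have hcard : Stot.card ≤ 2 ^ (5*m - 1) := by
    have h2 : ∀ k ∈ K, (C k).card ≤ ∏ i, 2 ^ (k i) := by
      intro k hk
      have hkIcc : ∀ i, k i ∈ Finset.Icc 1 m :=
        Fintype.mem_piFinset.mp (Finset.mem_filter.mp hk).1
      calc (C k).card ≤ (Fintype.piFinset fun i => Sc i (k i)).card := Finset.card_image_le
        _ = ∏ i, (Sc i (k i)).card := Fintype.card_piFinset _
        _ ≤ ∏ i, 2 ^ (k i) := by
            apply Finset.prod_le_prod' -- maybe wrong name
            intro i _
            have h := (hkey i (k i) (Finset.mem_Icc.mp (hkIcc i)).1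
              (Finset.mem_Icc.mp (hkIcc i)).2).2.2.1
            exact le_trans h (Nat.pow_le_pow_right (by norm_num) (Nat.sub_le _ _))
    have h3 : (∑ k ∈ K, ∏ i, (2:ℝ) ^ (k i)) ≤ 4 ^ (2*m) := by
      have h4 : ∀ k ∈ K, ∏ i, (2:ℝ) ^ (k i) ≤ 4 ^ (2*m) * ∏ i, ((1:ℝ)/2) ^ (k i) := by
        intro k hk
        have hsum : ∑ i, k i ≤ 2*m := (Finset.mem_filter.mp hk).2
        have heq : ∏ i, (2:ℝ) ^ (k i) = (∏ i, ((1:ℝ)/2) ^ (k i)) * 4 ^ (∑ i, k i) := by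
          rw [← Finset.prod_pow_eq_pow_sum, ← Finset.prod_mul_distrib]
          apply Finset.prod_congr rfl
          intro i _
          rw [← mul_pow]
          norm_num
        rw [heq]
        have h40 : (4:ℝ) ^ (∑ i, k i) ≤ 4 ^ (2*m) :=
          pow_le_pow_right₀ (by norm_num) hsum
        have hpos : (0:ℝ) ≤ ∏ i, ((1:ℝ)/2) ^ (k i) := by positivity
        calc (∏ i, ((1:ℝ)/2) ^ (k i)) * 4 ^ (∑ i, k i)
            ≤ (∏ i, ((1:ℝ)/2) ^ (k i)) * 4 ^ (2*m) := by
              exact mul_le_mul_of_nonneg_left h40 hpos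
          _ = 4 ^ (2*m) * ∏ i, ((1:ℝ)/2) ^ (k i) := mul_comm _ _
      calc ∑ k ∈ K, ∏ i, (2:ℝ) ^ (k i)
          ≤ ∑ k ∈ K, 4 ^ (2*m) * ∏ i, ((1:ℝ)/2) ^ (k i) := Finset.sum_le_sum h4
        _ = 4 ^ (2*m) * ∑ k ∈ K, ∏ i, ((1:ℝ)/2) ^ (k i) := by rw [Finset.mul_sum]
        _ ≤ 4 ^ (2*m) * ∑ k ∈ Fintype.piFinset (fun _ : Fin m => Finset.Icc 1 m),
              ∏ i, ((1:ℝ)/2) ^ (k i) := by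
            apply mul_le_mul_of_nonneg_left _ (by positivity)
            apply Finset.sum_le_sum_of_subset_of_nonneg (Finset.filter_subset _ _)
            intro k _ _
            positivity
        _ = 4 ^ (2*m) * ∏ _i : Fin m, ∑ s ∈ Finset.Icc 1 m, ((1:ℝ)/2) ^ s := by
            rw [Finset.prod_univ_sum]
        _ ≤ 4 ^ (2*m) * 1 := by
            apply mul_le_mul_of_nonneg_left _ (by positivity)
            apply Finset.prod_le_one
            · intro i _; positivity
            · intro i _; exact geom_half_Icc_le_one m
        _ = 4 ^ (2*m) := mul_one _
    have h5 : Stot.card ≤ 4 ^ (2*m) := by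
      have hb : (Stot.card : ℝ) ≤ ((4 ^ (2*m) : ℕ) : ℝ) := by
        push_cast
        calc (Stot.card : ℝ) ≤ ((∑ k ∈ K, (C k).card : ℕ) : ℝ) := by
              exact_mod_cast Finset.card_biUnion_le
          _ ≤ ((∑ k ∈ K, ∏ i, 2 ^ (k i) : ℕ) : ℝ) := by
              exact_mod_cast Finset.sum_le_sum h2
          _ = ∑ k ∈ K, ∏ i, (2:ℝ) ^ (k i) := by push_cast; ring
          _ ≤ 4 ^ (2*m) := h3
      exact_mod_cast hb
    calc Stot.card ≤ 4 ^ (2*m) := h5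
      _ = 2 ^ (4*m) := by rw [show (4:ℕ) = 2^2 by norm_num, ← pow_mul]; ring_nf
      _ ≤ 2 ^ (5*m-1) := Nat.pow_le_pow_right (by norm_num) (by omega)
  -- membership in the defining set
  refine csInf_le ⟨0, fun t ht => ht.1.le⟩ ⟨hε0, Stot, hcard, ?_⟩
  rintro z ⟨x, hx, rfl⟩
  rw [mem_closedBall_zero_iff] at hx
  have hid : ∀ a : ℝ, 0 ≤ a → (a ^ p.toReal) ^ (1 / p.toReal) = a := by
    intro a ha
    rw [one_div]
    exact Real.rpow_rpow_inv ha hp0'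
  have hxsum : ∑ i, ‖x i‖ ^ p.toReal ≤ 1 := by
    have hnorm := PiLp.norm_eq_sum hp0 x
    rw [hnorm] at hx
    by_contra hcon
    push_neg at hcon
    have h1 : (1:ℝ) < (∑ i, ‖x i‖ ^ p.toReal) ^ (1 / p.toReal) := by
      have := Real.rpow_lt_rpow (by norm_num) hcon (by positivity : (0:ℝ) < 1 / p.toReal)
      simpa using this
    linarith
  have hterm : ∀ i, ‖x i‖ ^ p.toReal ≤ 1 := by
    intro i
    refine le_trans ?_ hxsum
    exact Finset.single_le_sum (f := fun i => ‖x i‖ ^ p.toReal)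
      (fun j _ => by positivity) (Finset.mem_univ i)
  have hxi1 : ∀ i, ‖x i‖ ≤ 1 := by
    intro i
    calc ‖x i‖ = (‖x i‖ ^ p.toReal) ^ (1 / p.toReal) := (hid _ (norm_nonneg _)).symm
      _ ≤ 1 ^ (1 / p.toReal) := Real.rpow_le_rpow (by positivity) (hterm i) (by positivity)
      _ = 1 := Real.one_rpow _
  set k : Fin m → ℕ := fun i => max 1 ⌈(m:ℝ) * ‖x i‖ ^ p.toReal⌉₊ with hkdef
  have hk1 : ∀ i, 1 ≤ k i := fun i => le_max_left _ _
  have hkm : ∀ i, k i ≤ m := by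
    intro i
    apply max_le hm0
    rw [Nat.ceil_le]
    calc (m:ℝ) * ‖x i‖ ^ p.toReal ≤ (m:ℝ) * 1 :=
        mul_le_mul_of_nonneg_left (hterm i) hmR.le
      _ = m := mul_one _
  have hkR : ∀ i, (k i : ℝ) ≤ (m:ℝ) * ‖x i‖ ^ p.toReal + 1 := by
    intro i
    rw [hkdef]
    push_cast [Nat.cast_max]
    apply max_le
    · have : (0:ℝ) ≤ (m:ℝ) * ‖x i‖ ^ p.toReal := by positivity
      linarith
    · have := Nat.ceil_lt_add_one (by positivity : (0:ℝ) ≤ (m:ℝ) * ‖x i‖ ^ p.toReal)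
      linarith
  have hksum : ∑ i, k i ≤ 2*m := by
    have hR : (∑ i, (k i : ℝ)) ≤ 2*m := by
      calc ∑ i, (k i:ℝ) ≤ ∑ i, ((m:ℝ) * ‖x i‖ ^ p.toReal + 1) :=
          Finset.sum_le_sum (fun i _ => hkR i)
        _ = (m:ℝ) * (∑ i, ‖x i‖ ^ p.toReal) + m := by
            rw [Finset.sum_add_distrib, ← Finset.mul_sum]
            simp [Finset.card_univ]
        _ ≤ (m:ℝ) * 1 + m := by
            have := mul_le_mul_of_nonneg_left hxsum hmR.le
            linarith
        _ = 2*m := by ring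
    exact_mod_cast hR
  have hkmem : k ∈ K := Finset.mem_filter.mpr
    ⟨Fintype.mem_piFinset.mpr (fun i => Finset.mem_Icc.mpr ⟨hk1 i, hkm i⟩), hksum⟩
  have hb0 : ∀ i, (0:ℝ) < (k i : ℝ)/m := by
    intro i
    apply div_pos _ hmR
    exact_mod_cast hk1 i
  have hb1 : ∀ i, (k i : ℝ)/m ≤ 1 := by
    intro i
    rw [div_le_one hmR]
    exact_mod_cast hkm i
  have hck : ∀ i, 0 < c k i := fun i => Real.rpow_pos_of_pos (hb0 i) _
  have hxc : ∀ i, ‖x i‖ ≤ c k i := by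
    intro i
    have h1 : ‖x i‖ ^ p.toReal ≤ (k i:ℝ)/m := by
      rw [le_div_iff₀ hmR]
      have h2 : (m:ℝ) * ‖x i‖ ^ p.toReal ≤ (⌈(m:ℝ) * ‖x i‖ ^ p.toReal⌉₊ : ℝ) := Nat.le_ceil _
      have h3 : (⌈(m:ℝ) * ‖x i‖ ^ p.toReal⌉₊ : ℝ) ≤ (k i : ℝ) := by
        exact_mod_cast le_max_right 1 _
      linarith [h2, h3]
    calc ‖x i‖ = (‖x i‖ ^ p.toReal) ^ (1 / p.toReal) := (hid _ (norm_nonneg _)).symm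
      _ ≤ ((k i:ℝ)/m) ^ (1 / p.toReal) := Real.rpow_le_rpow (by positivity) h1 (by positivity)
  -- choose per-coordinate centers
  have hcover : ∀ i, ∃ y ∈ Sc i (k i), ‖(Ti i) ((c k i)⁻¹ • x i) - y‖ ≤ r i (k i) := by
    intro i
    obtain ⟨h0r, hrle, hScard, hScov⟩ := hkey i (k i) (hk1 i) (hkm i)
    have hmem : (Ti i) ((c k i)⁻¹ • x i) ∈ (Ti i) '' closedBall 0 1 := by
      refine ⟨(c k i)⁻¹ • x i, ?_, rfl⟩
      rw [mem_closedBall_zero_iff, norm_smul, Real.norm_eq_abs,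
        abs_of_pos (inv_pos.mpr (hck i))]
      rw [inv_mul_le_iff₀ (hck i), mul_one]
      exact hxc i
    have h := hScov hmem
    rw [mem_iUnion₂] at h
    obtain ⟨y, hy, hball⟩ := h
    refine ⟨y, hy, ?_⟩
    rw [← dist_eq_norm]
    exact mem_closedBall.mp hball
  choose yc hyc hdist using hcover
  set Yc : PiLp q Y := (WithLp.equiv q (∀ i, Y i)).symm (fun i => (c k i) • yc i) with hYcdef
  have hYmem : Yc ∈ Stot := Finset.mem_biUnion.mpr
    ⟨k, hkmem, Finset.mem_image.mpr ⟨yc, Fintype.mem_piFinset.mpr hyc, rfl⟩⟩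
  -- per-coordinate estimate
  have hcoord : ∀ i, ‖T x i - Yc i‖ ≤ (1+δ) * ((k i:ℝ)/m) ^ (1 / q.toReal) := by
    intro i
    have hYci : Yc i = (c k i) • yc i := rfl
    have hkey2 : (Ti i) (x i) - c k i • yc i
        = (c k i) • ((Ti i) ((c k i)⁻¹ • x i) - yc i) := by
      rw [map_smul, smul_sub, smul_inv_smul₀ (ne_of_gt (hck i))]
    rw [hT x i, hYci, hkey2, norm_smul, Real.norm_eq_abs, abs_of_pos (hck i)]
    have hr := (hkey i (k i) (hk1 i) (hkm i)).2.1
    have hstep1 : c k i * ‖(Ti i) ((c k i)⁻¹ • x i) - yc i‖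
        ≤ c k i * (((m:ℝ)/(k i)) ^ (1 / p.toReal - 1 / q.toReal) + δ) :=
      mul_le_mul_of_nonneg_left (le_trans (hdist i) hr) (hck i).le
    have hkipos : (0:ℝ) < (k i : ℝ) := by exact_mod_cast hk1 i
    have hflip : (m:ℝ)/(k i) = ((k i:ℝ)/m)⁻¹ := by
      rw [inv_div]
    have hstep2 : c k i * (((m:ℝ)/(k i)) ^ (1 / p.toReal - 1 / q.toReal) + δ)
        = ((k i:ℝ)/m) ^ (1 / q.toReal) + δ * c k i := by
      simp only [hc]
      rw [hflip, Real.inv_rpow (hb0 i).le, ← Real.rpow_neg (hb0 i).le,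
        mul_add, ← Real.rpow_add (hb0 i)]
      rw [show 1/p.toReal + -(1/p.toReal - 1/q.toReal) = 1/q.toReal by ring]
      ring
    have hstep3 : ((k i:ℝ)/m) ^ (1 / q.toReal) + δ * c k i
        ≤ (1+δ) * ((k i:ℝ)/m) ^ (1 / q.toReal) := by
      have hle : c k i ≤ ((k i:ℝ)/m) ^ (1 / q.toReal) :=
        Real.rpow_le_rpow_of_exponent_ge (hb0 i) (hb1 i) hqple
      have hq0' : (0:ℝ) ≤ ((k i:ℝ)/m) ^ (1 / q.toReal) := by positivity
      nlinarith [hδ0.le]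
    calc c k i * ‖(Ti i) ((c k i)⁻¹ • x i) - yc i‖
        ≤ c k i * (((m:ℝ)/(k i)) ^ (1 / p.toReal - 1 / q.toReal) + δ) := hstep1
      _ = ((k i:ℝ)/m) ^ (1 / q.toReal) + δ * c k i := hstep2
      _ ≤ (1+δ) * ((k i:ℝ)/m) ^ (1 / q.toReal) := hstep3
  -- conclude
  refine mem_iUnion₂.mpr ⟨Yc, hYmem, ?_⟩
  rw [mem_closedBall, dist_eq_norm]
  rcases eq_or_ne q ⊤ with hq | hq
  · subst hq
    haveI : Nonempty (Fin m) := ⟨⟨0, hm0⟩⟩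
    rw [PiLp.norm_eq_ciSup]
    apply ciSup_le
    intro i
    have h1 : ((k i:ℝ)/m) ^ (1 / (⊤:ℝ≥0∞).toReal) = 1 := by
      simp
    have h2 := hcoord i
    rw [h1, mul_one] at h2
    have h3 : (1+δ) = ε := by
      have : (2:ℝ) ^ (1 / (⊤:ℝ≥0∞).toReal) = 1 := by simp
      rw [this, mul_one] at hεδ
      exact hεδ
    calc ‖(T x - Yc) i‖ = ‖T x i - Yc i‖ := rfl
      _ ≤ (1+δ) := h2
      _ = ε := h3
  · have hq1 : 1 ≤ q.toReal := by
      have := ENNReal.toReal_mono hq (Fact.out : 1 ≤ q)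
      simpa using this
    have hq0'' : 0 < q.toReal := lt_of_lt_of_le one_pos hq1
    have hq0''' : q.toReal ≠ 0 := ne_of_gt hq0''
    rw [PiLp.norm_eq_sum hq0'']
    have hsum : ∑ i, ‖(T x - Yc) i‖ ^ q.toReal ≤ (1+δ) ^ q.toReal * 2 := by
      have hterm2 : ∀ i, ‖(T x - Yc) i‖ ^ q.toReal ≤ (1+δ) ^ q.toReal * ((k i:ℝ)/m) := by
        intro i
        have h1 : ‖(T x - Yc) i‖ = ‖T x i - Yc i‖ := rfl
        have h2 : ‖(T x - Yc) i‖ ^ q.toReal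
            ≤ ((1+δ) * ((k i:ℝ)/m) ^ (1 / q.toReal)) ^ q.toReal := by
          apply Real.rpow_le_rpow (norm_nonneg _) _ hq0
          rw [h1]; exact hcoord i
        refine le_trans h2 ?_
        rw [Real.mul_rpow (by positivity) (by positivity), one_div,
          Real.rpow_inv_rpow (hb0 i).le hq0''']
      calc ∑ i, ‖(T x - Yc) i‖ ^ q.toReal
          ≤ ∑ i, (1+δ) ^ q.toReal * ((k i:ℝ)/m) := Finset.sum_le_sum (fun i _ => hterm2 i)
        _ = (1+δ) ^ q.toReal * ((∑ i, (k i:ℝ))/m) := by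
            rw [← Finset.mul_sum, ← Finset.sum_div]
        _ ≤ (1+δ) ^ q.toReal * 2 := by
            apply mul_le_mul_of_nonneg_left _ (by positivity)
            rw [div_le_iff₀ hmR]
            have : (∑ i, (k i:ℝ)) ≤ 2*m := by exact_mod_cast hksum
            linarith
    calc (∑ i, ‖(T x - Yc) i‖ ^ q.toReal) ^ (1 / q.toReal)
        ≤ ((1+δ) ^ q.toReal * 2) ^ (1 / q.toReal) := by
          apply Real.rpow_le_rpow (by positivity) hsum (by positivity)
      _ = (1+δ) * 2 ^ (1 / q.toReal) := by
          rw [Real.mul_rpow (by positivity) (by norm_num), one_div,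
            Real.rpow_rpow_inv (by positivity) hq0''']
      _ = ε := hεδ
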